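/- There exists an absolute constant C such that for every positive integer Δ and every bipartite graph G on n vertices with maximum degree at most Δ, every 2-edge-coloring of the complete graph on 2^{C·Δ}·n vertices contains a monochromatic copy of G; that is, the Ramsey number of G satisfies R(G) ≤ 2^{C·Δ}·n. -/

import Mathlib

set_option maxHeartbeats 1000000

namespace RBDB2

open Finset

variable {W : Type} [Fintype W] [DecidableEq W]

def cnL (H : SimpleGraph W) [DecidableRel H.Adj] (l : List W) : Finset W :=
  Finset.univ.filter fun w => ∀ v ∈ l, H.Adj v w

variable (H : SimpleGraph W) [DecidableRel H.Adj]

lemma mem_cnL {l : List W} {w : W} :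
    w ∈ cnL H l ↔ ∀ v ∈ l, H.Adj v w := by
  simp [cnL]

lemma cnL_anti {l l' : List W} (h : ∀ v ∈ l, v ∈ l') :
    cnL H l' ⊆ cnL H l := by
  intro w hw
  rw [mem_cnL] at *
  exact fun v hv => hw v (h v hv)

lemma card_tuples (Δ : ℕ) (s : Finset W) :
    ((Finset.univ : Finset (Fin Δ → W)).filter fun T => ∀ i, T i ∈ s).card = s.card ^ Δ := by
  have : ((Finset.univ : Finset (Fin Δ → W)).filter fun T => ∀ i, T i ∈ s)
      = Fintype.piFinset (fun _ : Fin Δ => s) := by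
    ext T; simp [Fintype.mem_piFinset]
  rw [this, Fintype.card_piFinset]
  simp

def Bad (A : Finset W) (Δ m : ℕ) : Finset (Fin Δ → W) :=
  Finset.univ.filter fun U =>
    Function.Injective U ∧ (∀ i, U i ∈ A) ∧ (cnL H (List.ofFn U)).card < m

lemma mem_Bad {A : Finset W} {Δ m : ℕ} {U : Fin Δ → W} :
    U ∈ Bad H A Δ m ↔
      Function.Injective U ∧ (∀ i, U i ∈ A) ∧ (cnL H (List.ofFn U)).card < m := by
  simp [Bad]

lemma sum_card_cn (Δ : ℕ) :
    ∑ T : Fin Δ → W, (cnL H (List.ofFn T)).card = ∑ w : W, (H.degree w) ^ Δ := by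
  have step : ∀ T : Fin Δ → W, (cnL H (List.ofFn T)).card
      = ∑ w : W, if (∀ i, T i ∈ H.neighborFinset w) then 1 else 0 := by
    intro T
    have h1 : cnL H (List.ofFn T)
        = Finset.univ.filter fun w => ∀ i, T i ∈ H.neighborFinset w := by
      ext w
      simp only [mem_cnL, Finset.mem_filter, Finset.mem_univ, true_and,
        List.forall_mem_ofFn_iff, SimpleGraph.mem_neighborFinset]
      constructor
      · exact fun h i => (h i).symm
      · exact fun h i => (h i).symm
    rw [h1, Finset.card_filter]
  calc ∑ T : Fin Δ → W, (cnL H (List.ofFn T)).card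
      = ∑ T : Fin Δ → W, ∑ w : W, if (∀ i, T i ∈ H.neighborFinset w) then 1 else 0 :=
        Finset.sum_congr rfl fun T _ => step T
    _ = ∑ w : W, ∑ T : Fin Δ → W, if (∀ i, T i ∈ H.neighborFinset w) then 1 else 0 :=
        Finset.sum_comm
    _ = ∑ w : W, (H.degree w) ^ Δ := by
        refine Finset.sum_congr rfl fun w _ => ?_
        rw [← Finset.card_filter, card_tuples]
        rfl

lemma sum_card_bad (Δ m : ℕ) :
    ∑ T : Fin Δ → W, (Bad H (cnL H (List.ofFn T)) Δ m).card
      ≤ (Fintype.card W) ^ Δ * m ^ Δ := by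
  have hTU : ∀ T U : Fin Δ → W,
      (∀ i, U i ∈ cnL H (List.ofFn T)) ↔ (∀ j, T j ∈ cnL H (List.ofFn U)) := by
    intro T U
    simp only [mem_cnL, List.forall_mem_ofFn_iff]
    constructor
    · exact fun h j i => (h i j).symm
    · exact fun h i j => (h j i).symm
  have step : ∀ T : Fin Δ → W, (Bad H (cnL H (List.ofFn T)) Δ m).card
      = ∑ U : Fin Δ → W, if (Function.Injective U ∧ (∀ j, T j ∈ cnL H (List.ofFn U))
          ∧ (cnL H (List.ofFn U)).card < m) then 1 else 0 := by
    intro T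
    have h1 : Bad H (cnL H (List.ofFn T)) Δ m
        = Finset.univ.filter fun U => (Function.Injective U
            ∧ (∀ j, T j ∈ cnL H (List.ofFn U)) ∧ (cnL H (List.ofFn U)).card < m) := by
      ext U
      rw [mem_Bad, Finset.mem_filter]
      simp only [Finset.mem_univ, true_and]
      rw [hTU]
    rw [h1, Finset.card_filter]
  calc ∑ T : Fin Δ → W, (Bad H (cnL H (List.ofFn T)) Δ m).card
      = ∑ U : Fin Δ → W, ∑ T : Fin Δ → W,
          if (Function.Injective U ∧ (∀ j, T j ∈ cnL H (List.ofFn U))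
            ∧ (cnL H (List.ofFn U)).card < m) then 1 else 0 := by
        rw [← Finset.sum_comm]
        exact Finset.sum_congr rfl fun T _ => step T
    _ ≤ ∑ _U : Fin Δ → W, m ^ Δ := by
        refine Finset.sum_le_sum fun U _ => ?_
        by_cases hU : Function.Injective U ∧ (cnL H (List.ofFn U)).card < m
        · have h2 : ∑ T : Fin Δ → W,
              (if (Function.Injective U ∧ (∀ j, T j ∈ cnL H (List.ofFn U))
                ∧ (cnL H (List.ofFn U)).card < m) then 1 else 0)
              = ∑ T : Fin Δ → W,
                (if (∀ j, T j ∈ cnL H (List.ofFn U)) then 1 else 0) := by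
            refine Finset.sum_congr rfl fun T _ => ?_
            refine if_congr ?_ rfl rfl
            tauto
          rw [h2, ← Finset.card_filter, card_tuples]
          exact Nat.pow_le_pow_left (le_of_lt hU.2) Δ
        · have h2 : ∀ T : Fin Δ → W,
              (if (Function.Injective U ∧ (∀ j, T j ∈ cnL H (List.ofFn U))
                ∧ (cnL H (List.ofFn U)).card < m) then 1 else 0) = 0 := by
            intro T; rw [if_neg]; tauto
          simp only [h2, Finset.sum_const_zero]
          positivity
    _ = (Fintype.card W) ^ Δ * m ^ Δ := by
        rw [Finset.sum_const, Finset.card_univ, smul_eq_mul]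
        congr 1
        rw [Fintype.card_fun]
        simp

lemma jensen {Δ : ℕ} (hΔ : 1 ≤ Δ)
    (h2 : 2 ≤ Fintype.card W)
    (hdens : Fintype.card W * (Fintype.card W - 1) ≤ 2 * ∑ w : W, H.degree w) :
    (Fintype.card W) ^ (Δ + 1) ≤ 4 ^ Δ * ∑ w : W, (H.degree w) ^ Δ := by
  obtain ⟨d, rfl⟩ : ∃ d, Δ = d + 1 := ⟨Δ - 1, by omega⟩
  set N := Fintype.card W with hN
  have hN0 : (0:ℝ) < (N:ℝ) := by
    have : 0 < N := by omega
    exact_mod_cast this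
  have hJ := pow_sum_div_card_le_sum_pow (s := (Finset.univ : Finset W))
    (f := fun w => (H.degree w : ℝ)) (fun i _ => by positivity) d
  rw [Finset.card_univ] at hJ
  have h1N : 1 ≤ N := by omega
  have hcast : (N:ℝ) * ((N:ℝ) - 1) ≤ 2 * ∑ w : W, (H.degree w : ℝ) := by
    have h' : ((N * (N-1) : ℕ) : ℝ) ≤ ((2 * ∑ w : W, H.degree w : ℕ) : ℝ) :=
      Nat.cast_le.mpr hdens
    push_cast [Nat.cast_sub h1N] at h'
    exact h'
  have h2' : (2:ℝ) ≤ (N:ℝ) := by exact_mod_cast h2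
  have hS' : (N:ℝ)^2 / 4 ≤ ∑ w : W, (H.degree w : ℝ) := by nlinarith
  have hpow : ((N:ℝ)^2/4) ^ (d+1) ≤ (∑ w : W, (H.degree w : ℝ)) ^ (d+1) := by
    apply pow_le_pow_left₀ (by positivity) hS'
  have key : ((N:ℝ)^2/4)^(d+1) / (N:ℝ)^d ≤ ∑ w : W, ((H.degree w : ℝ)) ^ (d+1) := by
    refine le_trans ?_ hJ
    gcongr
  have heq : ((N:ℝ)^2/4)^(d+1) / (N:ℝ)^d = (N:ℝ)^(d+2)/4^(d+1) := by
    rw [div_pow, div_div, div_eq_div_iff (by positivity) (by positivity)]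
    ring
  rw [heq, div_le_iff₀ (by positivity)] at key
  have final : ((N:ℝ))^(d+1+1) ≤ 4^(d+1) * ∑ w : W, ((H.degree w:ℝ))^(d+1) := by
    calc ((N:ℝ))^(d+1+1) = (N:ℝ)^(d+2) := by ring
      _ ≤ (∑ w : W, ((H.degree w : ℝ)) ^ (d+1)) * 4^(d+1) := key
      _ = _ := by ring
  exact_mod_cast final

lemma exists_good {Δ m : ℕ} (hΔ : 1 ≤ Δ)
    (hm : 1 ≤ m) (h2 : 2 ≤ Fintype.card W)
    (hdens : Fintype.card W * (Fintype.card W - 1) ≤ 2 * ∑ w : W, H.degree w) :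
    ∃ A : Finset W,
      Fintype.card W ≤ 2 * 4 ^ Δ * A.card ∧
      Fintype.card W * (Bad H A Δ m).card ≤ 2 * 4 ^ Δ * m ^ Δ * A.card := by
  classical
  set N := Fintype.card W with hNdef
  have hN0 : (0:ℝ) < (N:ℝ) := by
    have : 0 < N := by omega
    exact_mod_cast this
  have hm0 : (0:ℝ) < (m:ℝ)^Δ := by positivity
  have h40 : (0:ℝ) < 2 * 4^Δ := by positivity
  have hne : (Finset.univ : Finset (Fin Δ → W)).Nonempty := by
    have : Nonempty W := by
      rw [← Fintype.card_pos_iff]; omega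
    exact Finset.univ_nonempty
  -- the two global counts
  have hcn : ((N:ℝ))^(Δ+1) / 4^Δ ≤ ∑ T : Fin Δ → W, ((cnL H (List.ofFn T)).card : ℝ) := by
    have h := jensen H hΔ h2 hdens
    have h' : ((N:ℝ))^(Δ+1) ≤ 4^Δ * ∑ T : Fin Δ → W, ((cnL H (List.ofFn T)).card : ℝ) := by
      have hc : ∑ T : Fin Δ → W, ((cnL H (List.ofFn T)).card : ℝ)
          = ((∑ T : Fin Δ → W, (cnL H (List.ofFn T)).card : ℕ) : ℝ) := by push_cast; rfl
      rw [hc, sum_card_cn]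
      exact_mod_cast h
    rw [div_le_iff₀ (by positivity)]
    linarith [h']
  have hbad : ∑ T : Fin Δ → W, ((Bad H (cnL H (List.ofFn T)) Δ m).card : ℝ)
      ≤ (N:ℝ)^Δ * m^Δ := by
    have h := sum_card_bad H Δ m
    have hc : ∑ T : Fin Δ → W, ((Bad H (cnL H (List.ofFn T)) Δ m).card : ℝ)
        = ((∑ T : Fin Δ → W, (Bad H (cnL H (List.ofFn T)) Δ m).card : ℕ) : ℝ) := by
      push_cast; rfl
    rw [hc]
    exact_mod_cast h
  -- averaging
  have havg : ∑ T : Fin Δ → W, ((N:ℝ)/(2*4^Δ)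
        + (N:ℝ)/(2*4^Δ*m^Δ) * ((Bad H (cnL H (List.ofFn T)) Δ m).card : ℝ))
      ≤ ∑ T : Fin Δ → W, ((cnL H (List.ofFn T)).card : ℝ) := by
    rw [Finset.sum_add_distrib]
    have hcard : (Finset.univ : Finset (Fin Δ → W)).card = N^Δ := by
      rw [Finset.card_univ, Fintype.card_fun]
      simp [hNdef]
    have e1 : ∑ _T : Fin Δ → W, ((N:ℝ)/(2*4^Δ)) = (N:ℝ)^Δ * ((N:ℝ)/(2*4^Δ)) := by
      rw [Finset.sum_const, hcard, nsmul_eq_mul]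
      push_cast
      ring
    have e2 : ∑ T : Fin Δ → W, (N:ℝ)/(2*4^Δ*m^Δ) * ((Bad H (cnL H (List.ofFn T)) Δ m).card : ℝ)
        ≤ (N:ℝ)/(2*4^Δ*m^Δ) * ((N:ℝ)^Δ * m^Δ) := by
      rw [← Finset.mul_sum]
      have hpos : (0:ℝ) ≤ (N:ℝ)/(2*4^Δ*m^Δ) := by positivity
      exact mul_le_mul_of_nonneg_left hbad hpos
    refine le_trans (add_le_add (le_of_eq e1) e2) ?_
    refine le_trans (le_of_eq ?_) hcn
    field_simp
    ring
  obtain ⟨T, _, hT⟩ := Finset.exists_le_of_sum_le hne havg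
  refine ⟨cnL H (List.ofFn T), ?_, ?_⟩
  · have h' : (N:ℝ)/(2*4^Δ) ≤ ((cnL H (List.ofFn T)).card : ℝ) := by
      have hb0 : (0:ℝ) ≤ (N:ℝ)/(2*4^Δ*m^Δ) * ((Bad H (cnL H (List.ofFn T)) Δ m).card : ℝ) := by
        positivity
      linarith
    rw [div_le_iff₀ h40] at h'
    have : (N:ℝ) ≤ 2*4^Δ * ((cnL H (List.ofFn T)).card : ℝ) := by linarith
    exact_mod_cast this
  · have h' : (N:ℝ)/(2*4^Δ*m^Δ) * ((Bad H (cnL H (List.ofFn T)) Δ m).card : ℝ)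
        ≤ ((cnL H (List.ofFn T)).card : ℝ) := by
      have hb0 : (0:ℝ) ≤ (N:ℝ)/(2*4^Δ) := by positivity
      linarith
    rw [div_mul_eq_mul_div, div_le_iff₀ (by positivity)] at h'
    have : (N:ℝ) * ((Bad H (cnL H (List.ofFn T)) Δ m).card : ℝ)
        ≤ 2*4^Δ*m^Δ * ((cnL H (List.ofFn T)).card : ℝ) := by linarith
    exact_mod_cast this

def wc (A : Finset W) (Δ m : ℕ) (l : List W) : ℕ :=
  ((Bad H A Δ m).filter fun U => l <+: List.ofFn U).card

lemma wc_nil (A : Finset W) (Δ m : ℕ) :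
    wc H A Δ m [] = (Bad H A Δ m).card := by
  simp [wc, List.nil_prefix]

lemma wc_sum (A : Finset W) (Δ m : ℕ) {l : List W}
    (hlen : l.length < Δ) :
    ∑ v ∈ A, wc H A Δ m (l ++ [v]) ≤ wc H A Δ m l := by
  classical
  have hfib : ((Bad H A Δ m).filter fun U => l <+: List.ofFn U).card
      = ∑ v ∈ A, (((Bad H A Δ m).filter fun U => l <+: List.ofFn U).filter
          fun U => U ⟨l.length, hlen⟩ = v).card := by
    apply Finset.card_eq_sum_card_fiberwise
    intro U hU
    rw [Finset.mem_coe, Finset.mem_filter] at hU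
    exact ((mem_Bad H).mp hU.1).2.1 _
  rw [wc, hfib]
  refine Finset.sum_le_sum fun v hv => ?_
  apply Finset.card_le_card
  intro U hU
  rw [Finset.mem_filter] at hU ⊢
  obtain ⟨hUb, hpre⟩ := hU
  have hpre' : l <+: List.ofFn U := List.IsPrefix.trans ⟨[v], rfl⟩ hpre
  refine ⟨Finset.mem_filter.mpr ⟨hUb, hpre'⟩, ?_⟩
  have hlenlt : l.length < (l ++ [v]).length := by simp
  have h1 : (l ++ [v])[l.length] = (List.ofFn U)[l.length]'(by simpa using hlen) :=
    hpre.getElem hlenlt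
  have h2 : (l ++ [v])[l.length] = v := by
    simp
  rw [h2] at h1
  rw [List.getElem_ofFn] at h1
  exact h1.symm

lemma forb_small (A : Finset W) (Δ m : ℕ) {l : List W}
    (hlen : l.length < Δ) (ha : 1 ≤ A.card) (hΔ : 1 ≤ Δ) :
    2 * Δ * ((A.filter fun v =>
      2 * Δ * wc H A Δ m l < A.card * wc H A Δ m (l ++ [v])).card) < A.card := by
  classical
  set F := A.filter fun v => 2 * Δ * wc H A Δ m l < A.card * wc H A Δ m (l ++ [v]) with hF
  by_cases hw : wc H A Δ m l = 0
  · have hFe : F = ∅ := by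
      rw [hF]
      apply Finset.filter_false_of_mem
      intro v hv
      have h1 : wc H A Δ m (l ++ [v]) ≤ wc H A Δ m l := by
        have := wc_sum H A Δ m hlen
        calc wc H A Δ m (l ++ [v]) ≤ ∑ u ∈ A, wc H A Δ m (l ++ [u]) :=
              Finset.single_le_sum (f := fun u => wc H A Δ m (l ++ [u]))
                (fun u _ => Nat.zero_le _) hv
          _ ≤ wc H A Δ m l := this
      have h0 : wc H A Δ m (l ++ [v]) = 0 := by omega
      simp [hw, h0]
    rw [hFe]
    simpa using ha
  · have hkey : F.card * (2 * Δ * wc H A Δ m l + 1) ≤ A.card * wc H A Δ m l := by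
      calc F.card * (2 * Δ * wc H A Δ m l + 1)
          = ∑ _v ∈ F, (2 * Δ * wc H A Δ m l + 1) := by rw [Finset.sum_const, smul_eq_mul]
        _ ≤ ∑ v ∈ F, A.card * wc H A Δ m (l ++ [v]) := by
            refine Finset.sum_le_sum fun v hv => ?_
            rw [hF, Finset.mem_filter] at hv
            omega
        _ = A.card * ∑ v ∈ F, wc H A Δ m (l ++ [v]) := by rw [Finset.mul_sum]
        _ ≤ A.card * ∑ v ∈ A, wc H A Δ m (l ++ [v]) := by
            apply Nat.mul_le_mul_left
            apply Finset.sum_le_sum_of_subset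
            rw [hF]; exact Finset.filter_subset _ _
        _ ≤ A.card * wc H A Δ m l := Nat.mul_le_mul_left _ (wc_sum H A Δ m hlen)
    by_cases hF0 : F.card = 0
    · rw [hF0, Nat.mul_zero]; omega
    · have h1 : F.card * (2 * Δ * wc H A Δ m l) < F.card * (2 * Δ * wc H A Δ m l + 1) := by
        have hFpos : 0 < F.card := Nat.pos_of_ne_zero hF0
        calc F.card * (2 * Δ * wc H A Δ m l) < F.card * (2 * Δ * wc H A Δ m l) + F.card := by omega
          _ = F.card * (2 * Δ * wc H A Δ m l + 1) := by ring
      have h2 : F.card * (2 * Δ * wc H A Δ m l) < A.card * wc H A Δ m l := by omega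
      have h3 : (2 * Δ * F.card) * wc H A Δ m l < A.card * wc H A Δ m l := by
        calc (2 * Δ * F.card) * wc H A Δ m l = F.card * (2 * Δ * wc H A Δ m l) := by ring
          _ < A.card * wc H A Δ m l := h2
      exact lt_of_mul_lt_mul_right h3 (Nat.zero_le _)

lemma wc_lower (A : Finset W) (Δ m : ℕ) {l : List W}
    (hnd : l.Nodup) (hlA : ∀ v ∈ l, v ∈ A) (hlen : l.length ≤ Δ)
    (hcn : (cnL H l).card < m) :
    (A.card - Δ) ^ (Δ - l.length) ≤ wc H A Δ m l := by
  classical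
  set k := l.length with hk
  have hlsub : l.toFinset ⊆ A := by
    intro v hv; exact hlA v (List.mem_toFinset.mp hv)
  have hpoolcard : (A \ l.toFinset).card = A.card - k := by
    rw [Finset.card_sdiff_of_subset hlsub, List.card_toFinset, hnd.dedup]
  -- the extension map
  set U : (Fin (Δ - k) ↪ {x // x ∈ A \ l.toFinset}) → (Fin Δ → W) := fun e i =>
    if h : (i : ℕ) < k then l.get ⟨i, by omega⟩
    else (e ⟨(i : ℕ) - k, by omega⟩ : W) with hU
  have hmaps : ∀ e, U e ∈ (Bad H A Δ m).filter fun V => l <+: List.ofFn V := by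
    intro e
    have hinj : Function.Injective (U e) := by
      intro i j hij
      rw [hU] at hij
      dsimp only at hij
      by_cases hi : (i : ℕ) < k <;> by_cases hj : (j : ℕ) < k
      · rw [dif_pos hi, dif_pos hj] at hij
        have h := (hnd.get_inj_iff).mp hij
        injection h with hval
        exact Fin.ext hval
      · rw [dif_pos hi, dif_neg hj] at hij
        exfalso
        have h2 := (e ⟨(j:ℕ) - k, by omega⟩).2
        rw [Finset.mem_sdiff] at h2
        apply h2.2
        rw [← hij]
        exact List.mem_toFinset.mpr (l.get_mem _)
      · rw [dif_neg hi, dif_pos hj] at hij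
        exfalso
        have h2 := (e ⟨(i:ℕ) - k, by omega⟩).2
        rw [Finset.mem_sdiff] at h2
        apply h2.2
        rw [hij]
        exact List.mem_toFinset.mpr (l.get_mem _)
      · rw [dif_neg hi, dif_neg hj] at hij
        have h := e.injective (Subtype.ext hij)
        injection h with hval
        apply Fin.ext
        omega
    have hmem : ∀ i, U e i ∈ A := by
      intro i
      rw [hU]
      dsimp only
      by_cases hi : (i : ℕ) < k
      · rw [dif_pos hi]
        exact hlA _ (l.get_mem _)
      · rw [dif_neg hi]
        have h2 := (e ⟨(i:ℕ) - k, by omega⟩).2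
        rw [Finset.mem_sdiff] at h2
        exact h2.1
    have hsub : ∀ v ∈ l, v ∈ List.ofFn (U e) := by
      intro v hv
      obtain ⟨⟨j, hj⟩, rfl⟩ := List.mem_iff_get.mp hv
      rw [List.mem_ofFn]
      refine ⟨⟨j, by omega⟩, ?_⟩
      rw [hU]
      dsimp only
      rw [dif_pos (by omega : (j:ℕ) < k)]
    have hcodeg : (cnL H (List.ofFn (U e))).card < m :=
      lt_of_le_of_lt (Finset.card_le_card (cnL_anti H hsub)) hcn
    have hpre : l <+: List.ofFn (U e) := by
      rw [List.prefix_iff_eq_take]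
      apply List.ext_getElem
      · simp [List.length_take, List.length_ofFn]
        omega
      · intro i h1 h2
        simp only [List.getElem_take, List.getElem_ofFn]
        simp only [hU]
        rw [dif_pos (by omega : i < k)]
        simp [List.get_eq_getElem]
    rw [Finset.mem_filter, mem_Bad]
    exact ⟨⟨hinj, hmem, hcodeg⟩, hpre⟩
  have hinjOn : Set.InjOn U (Finset.univ : Finset (Fin (Δ - k) ↪ {x // x ∈ A \ l.toFinset})) := by
    intro e _ e' _ h
    apply DFunLike.ext
    intro j
    have := congrFun h ⟨k + (j : ℕ), by omega⟩
    rw [hU] at this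
    dsimp only at this
    rw [dif_neg (by omega), dif_neg (by omega)] at this
    apply Subtype.ext
    have hidx : (⟨k + (j:ℕ) - k, by omega⟩ : Fin (Δ - k)) = j := by
      apply Fin.ext; simp
    rw [hidx] at this
    exact this
  have hcount := Finset.card_le_card_of_injOn U (fun e _ => hmaps e) hinjOn
  rw [Finset.card_univ, Fintype.card_embedding_eq, Fintype.card_coe, Fintype.card_fin,
    hpoolcard] at hcount
  refine le_trans ?_ hcount
  calc (A.card - Δ) ^ (Δ - k)
      ≤ ((A.card - k) + 1 - (Δ - k)) ^ (Δ - k) := Nat.pow_le_pow_left (by omega) _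
    _ ≤ (A.card - k).descFactorial (Δ - k) := Nat.pow_sub_le_descFactorial _ _

lemma natArith {Δ n N a b : ℕ} (hΔ : 1 ≤ Δ) (hn : 1 ≤ n)
    (hN : 2 ^ (10 * Δ) * n ≤ N) (h1 : N ≤ 2 * 4 ^ Δ * a)
    (h2 : N * b ≤ 2 * 4 ^ Δ * n ^ Δ * a) :
    (8 * Δ) ^ Δ * b ≤ a ^ Δ ∧ 2 * n + 2 ≤ a ∧ 2 * Δ ≤ a := by
  obtain ⟨d, rfl⟩ : ∃ d, Δ = d + 1 := ⟨Δ - 1, by omega⟩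
  have h4 : (4:ℕ) = 2^2 := by norm_num
  have he1 : 2 * 4 ^ (d+1) = 2 ^ (2*(d+1)+1) := by
    rw [h4, ← pow_mul, pow_succ]
    ring
  have ha : 2 ^ (8*d+7) * n ≤ a := by
    have hc : 2 ^ (2*(d+1)+1) * (2 ^ (8*d+7) * n) ≤ 2 ^ (2*(d+1)+1) * a := by
      calc 2 ^ (2*(d+1)+1) * (2 ^ (8*d+7) * n) = 2 ^ (10*(d+1)) * n := by
            rw [← mul_assoc, ← pow_add]
            congr 2
            omega
        _ ≤ N := hN
        _ ≤ 2 * 4^(d+1) * a := h1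
        _ = 2 ^ (2*(d+1)+1) * a := by rw [he1]
    exact Nat.le_of_mul_le_mul_left hc (by positivity)
  have hd28 : d + 1 ≤ 2 ^ (8*d) := by
    calc d + 1 ≤ 2 ^ d := Nat.lt_two_pow_self
      _ ≤ 2 ^ (8*d) := Nat.pow_le_pow_right (by norm_num) (by omega)
  have hsplit : 2 ^ (8*d+7) = 128 * 2 ^ (8*d) := by
    rw [pow_add]; ring
  have h128a : 128 * 2 ^ (8*d) ≤ a := by
    calc 128 * 2 ^ (8*d) = 2 ^ (8*d+7) * 1 := by rw [hsplit]; ring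
      _ ≤ 2 ^ (8*d+7) * n := Nat.mul_le_mul_left _ hn
      _ ≤ a := ha
  have h128n : 128 * n ≤ a := by
    calc 128 * n ≤ 2 ^ (8*d+7) * n := Nat.mul_le_mul_right _ (by
        calc (128:ℕ) = 2^7 := by norm_num
          _ ≤ 2 ^ (8*d+7) := Nat.pow_le_pow_right (by norm_num) (by omega))
      _ ≤ a := ha
  refine ⟨?_, by omega, by nlinarith [hd28, h128a]⟩
  -- main inequality
  have hNpos : 0 < N := by
    have : 0 < 2 ^ (10*(d+1)) * n := by positivity
    omega
  set Δ := d + 1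
  have h8Δ : 8 * Δ ≤ 2 ^ (Δ + 3) := by
    have : Δ ≤ 2 ^ Δ := le_of_lt Nat.lt_two_pow_self
    calc 8 * Δ ≤ 8 * 2 ^ Δ := Nat.mul_le_mul_left _ this
      _ = 2 ^ (Δ + 3) := by rw [pow_add]; ring
  have hkey : (8*Δ)^Δ * (2 * 4^Δ * n^Δ) ≤ N * a^d := by
    calc (8*Δ)^Δ * (2 * 4^Δ * n^Δ)
        ≤ (2^(Δ+3))^Δ * (2 * 4^Δ * n^Δ) :=
          Nat.mul_le_mul_right _ (Nat.pow_le_pow_left h8Δ _)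
      _ = 2 ^ ((Δ+3)*Δ + (2*Δ+1)) * n^Δ := by
          rw [he1, ← pow_mul, ← mul_assoc, ← pow_add]
      _ ≤ 2 ^ (10*Δ + (8*d+7)*d) * n^Δ := by
          apply Nat.mul_le_mul_right
          apply Nat.pow_le_pow_right (by norm_num)
          simp only [Δ]
          ring_nf
          omega
      _ = (2^(10*Δ) * n) * ((2^(8*d+7))^d * n^d) := by
          rw [pow_add, ← pow_mul]
          have : Δ = d + 1 := rfl
          rw [this, pow_succ]
          ring
      _ ≤ N * ((2^(8*d+7) * n)^d) := by
          rw [mul_pow]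
          exact Nat.mul_le_mul hN (le_refl _)
      _ ≤ N * a^d := Nat.mul_le_mul_left _ (Nat.pow_le_pow_left ha _)
  have hfinal : N * ((8*Δ)^Δ * b) ≤ N * a^Δ := by
    calc N * ((8*Δ)^Δ * b) = (8*Δ)^Δ * (N * b) := by ring
      _ ≤ (8*Δ)^Δ * (2 * 4^Δ * n^Δ * a) := Nat.mul_le_mul_left _ h2
      _ = ((8*Δ)^Δ * (2 * 4^Δ * n^Δ)) * a := by ring
      _ ≤ (N * a^d) * a := Nat.mul_le_mul_right _ hkey
      _ = N * a^Δ := by rw [mul_assoc, ← pow_succ]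
  exact Nat.le_of_mul_le_mul_left hfinal hNpos

lemma rich_contra {a b w Δ k : ℕ} (hΔ : 1 ≤ Δ) (hk : k ≤ Δ) (h2Δ : 2 * Δ ≤ a)
    (hb : (8 * Δ) ^ Δ * b ≤ a ^ Δ) (hw : a ^ k * w ≤ (2 * Δ) ^ k * b)
    (hlow : (a - Δ) ^ (Δ - k) ≤ w) : False := by
  have ha0 : 0 < a := by omega
  have h1 : a ^ k * (a - Δ) ^ (Δ - k) * (8*Δ)^Δ ≤ (2*Δ)^k * a^Δ := by
    calc a ^ k * (a - Δ) ^ (Δ - k) * (8*Δ)^Δ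
        ≤ (a ^ k * w) * (8*Δ)^Δ :=
          Nat.mul_le_mul_right _ (Nat.mul_le_mul_left _ hlow)
      _ ≤ ((2*Δ)^k * b) * (8*Δ)^Δ := Nat.mul_le_mul_right _ hw
      _ = (2*Δ)^k * ((8*Δ)^Δ * b) := by ring
      _ ≤ (2*Δ)^k * a^Δ := Nat.mul_le_mul_left _ hb
  have h2 : a ^ Δ ≤ 2 ^ (Δ - k) * (a ^ k * (a - Δ) ^ (Δ - k)) := by
    have hsub : a ≤ 2 * (a - Δ) := by omega
    calc a ^ Δ = a ^ (Δ - k) * a ^ k := by rw [← pow_add]; congr 1; omega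
      _ ≤ (2 * (a - Δ)) ^ (Δ - k) * a ^ k :=
          Nat.mul_le_mul_right _ (Nat.pow_le_pow_left hsub _)
      _ = 2 ^ (Δ - k) * (a ^ k * (a - Δ) ^ (Δ - k)) := by rw [mul_pow]; ring
  have h3 : a ^ Δ * (8*Δ)^Δ ≤ 2 ^ (Δ - k) * ((2*Δ)^k * a^Δ) := by
    calc a ^ Δ * (8*Δ)^Δ ≤ (2 ^ (Δ - k) * (a ^ k * (a - Δ) ^ (Δ - k))) * (8*Δ)^Δ :=
          Nat.mul_le_mul_right _ h2
      _ = 2 ^ (Δ - k) * (a ^ k * (a - Δ) ^ (Δ - k) * (8*Δ)^Δ) := by ring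
      _ ≤ 2 ^ (Δ - k) * ((2*Δ)^k * a^Δ) := Nat.mul_le_mul_left _ h1
  have h4 : (8*Δ)^Δ ≤ 2 ^ (Δ - k) * (2*Δ)^k := by
    have := h3
    have hrw : a ^ Δ * (8*Δ)^Δ = ((8*Δ)^Δ) * a ^ Δ := by ring
    have hrw2 : 2 ^ (Δ - k) * ((2*Δ)^k * a^Δ) = (2 ^ (Δ - k) * (2*Δ)^k) * a ^ Δ := by ring
    rw [hrw, hrw2] at this
    exact Nat.le_of_mul_le_mul_right this (by positivity)
  have h5 : 2 ^ (Δ - k) * (2*Δ)^k < (8*Δ)^Δ := by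
    calc 2 ^ (Δ - k) * (2*Δ)^k = 2 ^ (Δ - k) * (2^k * Δ^k) := by rw [mul_pow]
      _ = 2 ^ Δ * Δ ^ k := by rw [← mul_assoc, ← pow_add]; congr 2; omega
      _ ≤ 2 ^ Δ * Δ ^ Δ := Nat.mul_le_mul_left _ (Nat.pow_le_pow_right (by omega) hk)
      _ < 8 ^ Δ * Δ ^ Δ := by
          have hp : 0 < Δ ^ Δ := Nat.pow_pos (by omega)
          have hq : 2 ^ Δ < 8 ^ Δ := Nat.pow_lt_pow_left (by norm_num) (by omega)
          exact Nat.mul_lt_mul_of_lt_of_le hq (le_refl _) hp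
      _ = (8*Δ)^Δ := by rw [← mul_pow]
  omega

section Greedy

variable {n : ℕ} (G : SimpleGraph (Fin n)) [DecidableRel G.Adj] (col : G.Coloring (Fin 2))

lemma fin2_eq_one {i : Fin 2} (h : i ≠ 0) : i = 1 := by omega

lemma greedyX (A : Finset W) {Δ m : ℕ} (hΔ : 1 ≤ Δ)
    (hbad : (8 * Δ) ^ Δ * (Bad H A Δ m).card ≤ A.card ^ Δ)
    (ha2n : 2 * n + 2 ≤ A.card)
    (hdeg : ∀ v, G.degree v ≤ Δ) :
    ∀ (xs : List (Fin n)) (used : Finset W) (σ : Fin n → List W),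
      xs.Nodup → (∀ x ∈ xs, col x = 0) →
      used.card + xs.length ≤ n →
      (∀ y, col y = 1 → ∀ v ∈ σ y, v ∈ used ∧ v ∈ A) →
      (∀ y, col y = 1 → (σ y).Nodup) →
      (∀ y, col y = 1 →
        (σ y).length + (xs.filter (fun x => G.Adj y x)).length = G.degree y) →
      (∀ y, col y = 1 →
        A.card ^ (σ y).length * wc H A Δ m (σ y)
          ≤ (2 * Δ) ^ (σ y).length * (Bad H A Δ m).card) →
      ∃ f : Fin n → W,
        (∀ x ∈ xs, f x ∈ A ∧ f x ∉ used) ∧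
        Set.InjOn f {x | x ∈ xs} ∧
        (∀ y, col y = 1 →
          ((σ y ++ (xs.filter (fun x => G.Adj y x)).map f).Nodup ∧
           (∀ v ∈ σ y ++ (xs.filter (fun x => G.Adj y x)).map f, v ∈ A) ∧
           A.card ^ (σ y ++ (xs.filter (fun x => G.Adj y x)).map f).length
             * wc H A Δ m (σ y ++ (xs.filter (fun x => G.Adj y x)).map f)
             ≤ (2 * Δ) ^ (σ y ++ (xs.filter (fun x => G.Adj y x)).map f).length
               * (Bad H A Δ m).card)) := by
  intro xs
  induction xs with
  | nil =>
      intro used σ _ _ _ hσuA hσnd _ hinv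
      obtain ⟨w0, hw0⟩ : A.Nonempty := Finset.card_pos.mp (by omega)
      refine ⟨fun _ => w0, by simp, by simp [Set.InjOn], ?_⟩
      intro y hy
      simp only [List.filter_nil, List.map_nil, List.append_nil]
      exact ⟨hσnd y hy, fun v hv => (hσuA y hy v hv).2, hinv y hy⟩
  | cons x rest ih =>
      intro used σ hnd hcol hcount hσuA hσnd hlen hinv
      have hxrest : x ∉ rest := (List.nodup_cons.mp hnd).1
      have hrestnd : rest.Nodup := (List.nodup_cons.mp hnd).2
      have hcolx : col x = 0 := hcol x (List.mem_cons_self)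
      have haA : 1 ≤ A.card := by omega
      set J := Finset.univ.filter (fun y : Fin n => G.Adj x y) with hJdef
      have hJmem : ∀ y, y ∈ J ↔ G.Adj x y := by
        intro y; rw [hJdef]; simp
      have hJcard : J.card ≤ Δ := by
        have : J = G.neighborFinset x := by
          ext y; rw [hJmem]; exact (SimpleGraph.mem_neighborFinset _ _ _).symm
        rw [this]
        exact hdeg x
      have hcoly : ∀ y ∈ J, col y = 1 := by
        intro y hy
        apply fin2_eq_one
        intro h0
        have := col.valid ((hJmem y).mp hy)
        rw [hcolx, h0] at this
        exact this rfl
      have hylen : ∀ y ∈ J, (σ y).length < Δ := by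
        intro y hy
        have h1 := hlen y (hcoly y hy)
        have hx : x ∈ (x :: rest).filter (fun z => G.Adj y z) := by
          rw [List.mem_filter]
          exact ⟨List.mem_cons_self, decide_eq_true (((hJmem y).mp hy).symm)⟩
        have h2 : 1 ≤ ((x :: rest).filter (fun z => G.Adj y z)).length :=
          List.length_pos_iff.mpr (List.ne_nil_of_mem hx)
        have h3 := hdeg y
        omega
      -- forbidden sets
      set F : Fin n → Finset W := fun y => A.filter fun v =>
        2 * Δ * wc H A Δ m (σ y) < A.card * wc H A Δ m (σ y ++ [v]) with hFdef
      have hFsmall : ∀ y ∈ J, 2 * Δ * (F y).card ≤ A.card - 1 := by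
        intro y hy
        have h := forb_small H A Δ m (hylen y hy) haA hΔ
        simp only [hFdef]
        omega
      have hsumF : 2 * (∑ y ∈ J, (F y).card) ≤ A.card - 1 := by
        have h1 : Δ * (2 * ∑ y ∈ J, (F y).card) ≤ Δ * (A.card - 1) := by
          calc Δ * (2 * ∑ y ∈ J, (F y).card) = (2 * Δ) * ∑ y ∈ J, (F y).card := by ring
            _ = ∑ y ∈ J, 2 * Δ * (F y).card := Finset.mul_sum _ _ _
            _ ≤ ∑ _y ∈ J, (A.card - 1) := Finset.sum_le_sum (fun y hy => hFsmall y hy)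
            _ = J.card * (A.card - 1) := by rw [Finset.sum_const, smul_eq_mul]
            _ ≤ Δ * (A.card - 1) := Nat.mul_le_mul_right _ hJcard
        exact Nat.le_of_mul_le_mul_left h1 (by omega)
      have husedcard : used.card ≤ n - 1 := by
        have := hcount
        simp only [List.length_cons] at this
        omega
      have hforb : (used ∪ J.biUnion F).card < A.card := by
        have h1 : (used ∪ J.biUnion F).card ≤ used.card + ∑ y ∈ J, (F y).card := by
          calc (used ∪ J.biUnion F).card ≤ used.card + (J.biUnion F).card :=
                Finset.card_union_le _ _
            _ ≤ used.card + ∑ y ∈ J, (F y).card :=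
                Nat.add_le_add_left (Finset.card_biUnion_le) _
        omega
      have hpick : (A \ (used ∪ J.biUnion F)).Nonempty := by
        rw [← Finset.card_pos]
        have := Finset.le_card_sdiff (used ∪ J.biUnion F) A
        omega
      obtain ⟨v, hv⟩ := hpick
      rw [Finset.mem_sdiff] at hv
      obtain ⟨hvA, hvnot⟩ := hv
      have hvused : v ∉ used := fun h => hvnot (Finset.mem_union_left _ h)
      have hvF : ∀ y ∈ J, v ∉ F y := by
        intro y hy h
        exact hvnot (Finset.mem_union_right _ (Finset.mem_biUnion.mpr ⟨y, hy, h⟩))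
      -- new state
      set σ' : Fin n → List W := fun y => if G.Adj x y then σ y ++ [v] else σ y with hσ'def
      have hstep := ih (insert v used) σ' hrestnd
        (fun z hz => hcol z (List.mem_cons_of_mem _ hz))
        (by
          have h1 : (insert v used).card ≤ used.card + 1 := Finset.card_insert_le _ _
          have := hcount
          simp only [List.length_cons] at this
          omega)
        (by
          intro y hy w hw
          rw [hσ'def] at hw
          dsimp only at hw
          by_cases hadj : G.Adj x y
          · rw [if_pos hadj] at hw
            rcases List.mem_append.mp hw with h | h
            · exact ⟨Finset.mem_insert_of_mem (hσuA y hy w h).1, (hσuA y hy w h).2⟩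
            · have : w = v := by simpa using h
              subst this
              exact ⟨Finset.mem_insert_self _ _, hvA⟩
          · rw [if_neg hadj] at hw
            exact ⟨Finset.mem_insert_of_mem (hσuA y hy w hw).1, (hσuA y hy w hw).2⟩)
        (by
          intro y hy
          rw [hσ'def]
          dsimp only
          by_cases hadj : G.Adj x y
          · rw [if_pos hadj]
            rw [List.nodup_append]
            refine ⟨hσnd y hy, List.nodup_singleton v, ?_⟩
            intro w hw u hu hwu
            have : u = v := by simpa using hu
            subst this
            exact hvused (hwu ▸ (hσuA y hy w hw).1)
          · rw [if_neg hadj]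
            exact hσnd y hy)
        (by
          intro y hy
          rw [hσ'def]
          dsimp only
          have h1 := hlen y hy
          by_cases hadj : G.Adj x y
          · rw [if_pos hadj]
            have hcons : List.filter (fun z => decide (G.Adj y z)) (x :: rest)
                = x :: List.filter (fun z => decide (G.Adj y z)) rest := by
              simp [List.filter_cons, hadj.symm]
            rw [hcons] at h1
            simp only [List.length_append, List.length_singleton, List.length_cons,
              List.length_nil] at h1 ⊢
            omega
          · rw [if_neg hadj]
            have hnadj : ¬ G.Adj y x := fun h => hadj h.symm
            have hcons : List.filter (fun z => decide (G.Adj y z)) (x :: rest)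
                = List.filter (fun z => decide (G.Adj y z)) rest := by
              simp [List.filter_cons, hnadj]
            rw [hcons] at h1
            exact h1)
        (by
          intro y hy
          rw [hσ'def]
          dsimp only
          by_cases hadj : G.Adj x y
          · rw [if_pos hadj]
            have hyJ : y ∈ J := (hJmem y).mpr hadj
            have hnF := hvF y hyJ
            rw [hFdef] at hnF
            simp only [Finset.mem_filter, not_and, not_lt] at hnF
            have hle : A.card * wc H A Δ m (σ y ++ [v]) ≤ 2 * Δ * wc H A Δ m (σ y) :=
              hnF hvA
            have hk := hinv y hy
            simp only [List.length_append, List.length_singleton]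
            calc A.card ^ ((σ y).length + 1) * wc H A Δ m (σ y ++ [v])
                = A.card ^ (σ y).length * (A.card * wc H A Δ m (σ y ++ [v])) := by
                  rw [pow_succ]; ring
              _ ≤ A.card ^ (σ y).length * (2 * Δ * wc H A Δ m (σ y)) :=
                  Nat.mul_le_mul_left _ hle
              _ = 2 * Δ * (A.card ^ (σ y).length * wc H A Δ m (σ y)) := by ring
              _ ≤ 2 * Δ * ((2 * Δ) ^ (σ y).length * (Bad H A Δ m).card) :=
                  Nat.mul_le_mul_left _ hk
              _ = (2 * Δ) ^ ((σ y).length + 1) * (Bad H A Δ m).card := by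
                  rw [pow_succ]; ring
          · rw [if_neg hadj]
            exact hinv y hy)
      obtain ⟨f, hf1, hf2, hf3⟩ := hstep
      refine ⟨Function.update f x v, ?_, ?_, ?_⟩
      · intro z hz
        rcases List.mem_cons.mp hz with rfl | hz'
        · rw [Function.update_self]
          exact ⟨hvA, hvused⟩
        · have hzx : z ≠ x := fun h => hxrest (h ▸ hz')
          rw [Function.update_of_ne hzx]
          have := hf1 z hz'
          exact ⟨this.1, fun h => this.2 (Finset.mem_insert_of_mem h)⟩
      · intro a ha b hb hab
        simp only [Set.mem_setOf_eq, List.mem_cons] at ha hb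
        have hval : ∀ c, c ∈ rest → Function.update f x v c = f c := fun c hc =>
          Function.update_of_ne (fun h => hxrest (by rw [← h]; exact hc)) _ _
        by_cases hax : a = x
        · by_cases hbx : b = x
          · rw [hax, hbx]
          · exfalso
            have hb' : b ∈ rest := hb.resolve_left hbx
            rw [hax, Function.update_self, hval b hb'] at hab
            apply (hf1 b hb').2
            rw [← hab]
            exact Finset.mem_insert_self _ _
        · have ha' : a ∈ rest := ha.resolve_left hax
          by_cases hbx : b = x
          · exfalso
            rw [hbx, Function.update_self, hval a ha'] at hab
            apply (hf1 a ha').2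
            rw [hab]
            exact Finset.mem_insert_self _ _
          · have hb' : b ∈ rest := hb.resolve_left hbx
            rw [hval a ha', hval b hb'] at hab
            exact hf2 ha' hb' hab
      · intro y hy
        by_cases hadj : G.Adj x y
        · have hfilter : (x :: rest).filter (fun z => G.Adj y z)
              = x :: rest.filter (fun z => G.Adj y z) :=
            List.filter_cons_of_pos (decide_eq_true hadj.symm)
          have hmapeq : (rest.filter (fun z => G.Adj y z)).map (Function.update f x v)
              = (rest.filter (fun z => G.Adj y z)).map f := by
            apply List.map_congr_left
            intro z hz
            have hz' : z ∈ rest := List.mem_of_mem_filter hz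
            exact Function.update_of_ne (fun h => hxrest (by rw [← h]; exact hz')) _ _
          have hlist : σ y ++ ((x :: rest).filter (fun z => G.Adj y z)).map
                (Function.update f x v)
              = σ' y ++ (rest.filter (fun z => G.Adj y z)).map f := by
            rw [hfilter, List.map_cons, Function.update_self, hmapeq, hσ'def]
            dsimp only
            rw [if_pos hadj, List.append_cons]
          rw [hlist]
          exact hf3 y hy
        · have hnadj : ¬ G.Adj y x := fun h => hadj h.symm
          have hfilter : (x :: rest).filter (fun z => G.Adj y z)
              = rest.filter (fun z => G.Adj y z) := by
            simp [List.filter_cons, hnadj]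
          have hmapeq : (rest.filter (fun z => G.Adj y z)).map (Function.update f x v)
              = (rest.filter (fun z => G.Adj y z)).map f := by
            apply List.map_congr_left
            intro z hz
            have hz' : z ∈ rest := List.mem_of_mem_filter hz
            exact Function.update_of_ne (fun h => hxrest (by rw [← h]; exact hz')) _ _
          have hlist : σ y ++ ((x :: rest).filter (fun z => G.Adj y z)).map
                (Function.update f x v)
              = σ' y ++ (rest.filter (fun z => G.Adj y z)).map f := by
            rw [hfilter, hmapeq, hσ'def]
            dsimp only
            rw [if_neg hadj]
          rw [hlist]
          exact hf3 y hy

end Greedy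

lemma greedyY {n : ℕ} [Nonempty W] (cand : Fin n → Finset W) :
    ∀ (ys : List (Fin n)) (used : Finset W),
      ys.Nodup →
      (∀ y ∈ ys, n ≤ (cand y).card) →
      used.card + ys.length ≤ n →
      ∃ g : Fin n → W,
        (∀ y ∈ ys, g y ∈ cand y ∧ g y ∉ used) ∧ Set.InjOn g {y | y ∈ ys} := by
  intro ys
  induction ys with
  | nil =>
      intro used _ _ _
      exact ⟨fun _ => Classical.arbitrary W, by simp, by simp [Set.InjOn]⟩
  | cons y rest ih =>
      intro used hnd hcand hcount
      have hyrest : y ∉ rest := (List.nodup_cons.mp hnd).1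
      have hpick : (cand y \ used).Nonempty := by
        rw [← Finset.card_pos]
        have h1 := Finset.le_card_sdiff used (cand y)
        have h2 := hcand y (List.mem_cons_self)
        simp only [List.length_cons] at hcount
        omega
      obtain ⟨w, hw⟩ := hpick
      rw [Finset.mem_sdiff] at hw
      obtain ⟨hwc, hwu⟩ := hw
      obtain ⟨g, hg1, hg2⟩ := ih (insert w used) (List.nodup_cons.mp hnd).2
        (fun z hz => hcand z (List.mem_cons_of_mem _ hz))
        (by
          have := Finset.card_insert_le w used
          simp only [List.length_cons] at hcount
          omega)
      refine ⟨Function.update g y w, ?_, ?_⟩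
      · intro z hz
        rcases List.mem_cons.mp hz with rfl | hz'
        · rw [Function.update_self]
          exact ⟨hwc, hwu⟩
        · rw [Function.update_of_ne (fun h => hyrest (by rw [← h]; exact hz'))]
          have := hg1 z hz'
          exact ⟨this.1, fun h => this.2 (Finset.mem_insert_of_mem h)⟩
      · intro a ha b hb hab
        simp only [Set.mem_setOf_eq, List.mem_cons] at ha hb
        have hval : ∀ c, c ∈ rest → Function.update g y w c = g c := fun c hc =>
          Function.update_of_ne (fun h => hyrest (by rw [← h]; exact hc)) _ _
        by_cases hay : a = y
        · by_cases hby : b = y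
          · rw [hay, hby]
          · exfalso
            have hb' : b ∈ rest := hb.resolve_left hby
            rw [hay, Function.update_self, hval b hb'] at hab
            apply (hg1 b hb').2
            rw [← hab]
            exact Finset.mem_insert_self _ _
        · have ha' : a ∈ rest := ha.resolve_left hay
          by_cases hby : b = y
          · exfalso
            rw [hby, Function.update_self, hval a ha'] at hab
            apply (hg1 a ha').2
            rw [hab]
            exact Finset.mem_insert_self _ _
          · have hb' : b ∈ rest := hb.resolve_left hby
            rw [hval a ha', hval b hb'] at hab
            exact hg2 ha' hb' hab

lemma length_filter_toList {n : ℕ} (X : Finset (Fin n)) (P : Fin n → Prop)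
    [DecidablePred P] :
    (X.toList.filter (fun x => P x)).length = (X.filter P).card := by
  have hnd1 : (X.toList.filter (fun x => P x)).Nodup := X.nodup_toList.filter _
  have hnd2 : ((X.filter P).toList).Nodup := Finset.nodup_toList _
  have hfeq : (X.toList.filter (fun x => P x)).toFinset = ((X.filter P).toList).toFinset := by
    ext z
    simp [List.mem_filter]

  have hperm := List.perm_of_nodup_nodup_toFinset_eq hnd1 hnd2 hfeq
  rw [hperm.length_eq, Finset.length_toList]

lemma embed_main {n Δ : ℕ} (hΔ : 1 ≤ Δ) (hn : 1 ≤ n)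
    (G : SimpleGraph (Fin n)) [DecidableRel G.Adj] (col : G.Coloring (Fin 2))
    (hdeg : ∀ v, G.degree v ≤ Δ)
    (hN : 2 ^ (10 * Δ) * n ≤ Fintype.card W)
    (hdens : Fintype.card W * (Fintype.card W - 1) ≤ 2 * ∑ w : W, H.degree w) :
    ∃ f : Fin n → W, Function.Injective f ∧
      ∀ u v : Fin n, G.Adj u v → H.Adj (f u) (f v) := by
  have h2 : 2 ≤ Fintype.card W := by
    have h1 : 2 ≤ 2 ^ (10 * Δ) * n := by
      calc 2 ≤ 2 ^ (10 * Δ) := by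
            have : 1 ≤ 10 * Δ := by omega
            calc (2:ℕ) = 2^1 := by norm_num
              _ ≤ 2 ^ (10*Δ) := Nat.pow_le_pow_right (by norm_num) this
        _ = 2 ^ (10*Δ) * 1 := by ring
        _ ≤ 2 ^ (10*Δ) * n := Nat.mul_le_mul_left _ hn
    omega
  have hW : Nonempty W := by rw [← Fintype.card_pos_iff]; omega
  obtain ⟨A, hA1, hA2⟩ := exists_good H (m := n) hΔ hn h2 hdens
  obtain ⟨hbad, ha2n, ha2Δ⟩ := natArith hΔ hn hN hA1 hA2
  set X := Finset.univ.filter (fun x : Fin n => col x = 0) with hXdef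
  set Y := Finset.univ.filter (fun y : Fin n => col y = 1) with hYdef
  have hcol01 : ∀ z : Fin n, col z = 0 ∨ col z = 1 := by
    intro z; omega
  have hXcard : X.card ≤ n := by
    calc X.card ≤ (Finset.univ : Finset (Fin n)).card := Finset.card_filter_le _ _
      _ = n := by simp
  have hXY : X.card + Y.card = n := by
    have hthis := Finset.card_filter_add_card_filter_not
      (s := (Finset.univ : Finset (Fin n))) (p := fun x : Fin n => col x = 0)
    rw [Finset.card_univ, Fintype.card_fin] at hthis
    have hYeq : (Finset.univ.filter (fun y : Fin n => col y = 1))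
        = (Finset.univ.filter (fun a : Fin n => ¬ col a = 0)) := by
      apply Finset.filter_congr
      intro z _
      constructor
      · intro h1 h0
        rw [h0] at h1
        exact absurd h1 (by norm_num)
      · intro hne
        exact fin2_eq_one hne
    rw [hXdef, hYdef, hYeq]
    exact hthis
  -- filter lengths
  have hflen : ∀ y, col y = 1 →
      ((X.toList.filter (fun x => G.Adj y x)).length = G.degree y) := by
    intro y hy
    have h1 : (X.toList.filter (fun x => G.Adj y x)).length
        = (X.filter (fun x => G.Adj y x)).card := length_filter_toList X _
    rw [h1]
    have h2 : X.filter (fun x => G.Adj y x) = G.neighborFinset y := by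
      ext z
      simp only [Finset.mem_filter, SimpleGraph.mem_neighborFinset, hXdef,
        Finset.mem_univ, true_and]
      constructor
      · exact fun h => h.2
      · intro h
        refine ⟨?_, h⟩
        have hne := col.valid h
        rcases hcol01 z with h0 | h1'
        · exact h0
        · exfalso
          rw [hy, h1'] at hne
          exact hne rfl
    rw [h2]
    rfl
  -- X phase
  have hgx := greedyX H G col A hΔ hbad ha2n hdeg X.toList ∅ (fun _ => [])
    (Finset.nodup_toList X)
    (by intro x hx
        rw [Finset.mem_toList, hXdef, Finset.mem_filter] at hx
        exact hx.2)
    (by rw [Finset.card_empty, Finset.length_toList]; omega)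
    (by intro y _ v hv; exact absurd hv List.not_mem_nil)
    (by intro y _; exact List.nodup_nil)
    (by intro y hy
        rw [List.length_nil, Nat.zero_add]
        exact hflen y hy)
    (by intro y _
        rw [List.length_nil, pow_zero, pow_zero, Nat.one_mul, Nat.one_mul, wc_nil])
  obtain ⟨fX, hfX1, hfX2, hfX3⟩ := hgx
  -- richness of candidate sets
  have hrich : ∀ y, col y = 1 →
      n ≤ (cnL H ((X.toList.filter (fun x => G.Adj y x)).map fX)).card := by
    intro y hy
    by_contra hlt
    push_neg at hlt
    obtain ⟨hnd', hA', hw'⟩ := hfX3 y hy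
    rw [List.nil_append] at hnd' hA' hw'
    set ly := (X.toList.filter (fun x => G.Adj y x)).map fX with hlydef
    have hlylen : ly.length = G.degree y := by
      rw [hlydef, List.length_map]
      exact hflen y hy
    have hkΔ : ly.length ≤ Δ := by rw [hlylen]; exact hdeg y
    have hlow := wc_lower H A Δ n hnd' hA' hkΔ hlt
    exact rich_contra hΔ hkΔ ha2Δ hbad hw' hlow
  -- Y phase
  set usedX := Finset.image fX X with husedXdef
  have hinjX : Set.InjOn fX ↑X := by
    intro a ha b hb hab
    apply hfX2 _ _ hab
    · simp only [Set.mem_setOf_eq, Finset.mem_toList]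
      exact ha
    · simp only [Set.mem_setOf_eq, Finset.mem_toList]
      exact hb
  have husedXcard : usedX.card = X.card := Finset.card_image_of_injOn hinjX
  have hgy := greedyY (cand := fun y =>
      if col y = 1 then cnL H ((X.toList.filter (fun x => G.Adj y x)).map fX)
      else Finset.univ)
    Y.toList usedX (Finset.nodup_toList Y)
    (by intro y hy
        rw [Finset.mem_toList, hYdef, Finset.mem_filter] at hy
        simp only [if_pos hy.2]
        exact hrich y hy.2)
    (by rw [husedXcard, Finset.length_toList]; omega)
  obtain ⟨g, hg1, hg2⟩ := hgy
  -- assemble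
  set f : Fin n → W := fun z => if col z = 0 then fX z else g z with hfdef
  have hmemX : ∀ z, col z = 0 → z ∈ X.toList := by
    intro z hz
    rw [Finset.mem_toList, hXdef, Finset.mem_filter]
    exact ⟨Finset.mem_univ z, hz⟩
  have hmemY : ∀ z, col z = 1 → z ∈ Y.toList := by
    intro z hz
    rw [Finset.mem_toList, hYdef, Finset.mem_filter]
    exact ⟨Finset.mem_univ z, hz⟩
  have hfx : ∀ z, col z = 0 → f z = fX z := by
    intro z hz; rw [hfdef]; dsimp only; rw [if_pos hz]
  have hfy : ∀ z, col z = 1 → f z = g z := by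
    intro z hz
    rw [hfdef]; dsimp only
    rw [if_neg (by rw [hz]; norm_num)]
  have hgnotX : ∀ z, col z = 1 → g z ∉ usedX := by
    intro z hz
    exact (hg1 z (hmemY z hz)).2
  have hfXin : ∀ z, col z = 0 → fX z ∈ usedX := by
    intro z hz
    rw [husedXdef]
    exact Finset.mem_image_of_mem fX (by
      rw [hXdef, Finset.mem_filter]; exact ⟨Finset.mem_univ z, hz⟩)
  -- adjacency
  have hadjmain : ∀ u v : Fin n, col u = 0 → col v = 1 → G.Adj u v →
      H.Adj (fX u) (g v) := by
    intro u v hu hv hadj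
    have hgv : g v ∈ cnL H ((X.toList.filter (fun x => G.Adj v x)).map fX) := by
      have := (hg1 v (hmemY v hv)).1
      simp only [if_pos hv] at this
      exact this
    rw [mem_cnL] at hgv
    apply hgv
    apply List.mem_map_of_mem
    rw [List.mem_filter]
    exact ⟨hmemX u hu, decide_eq_true hadj.symm⟩
  refine ⟨f, ?_, ?_⟩
  · intro a b hab
    rcases hcol01 a with hca | hca <;> rcases hcol01 b with hcb | hcb
    · rw [hfx a hca, hfx b hcb] at hab
      have := hinjX (by
          rw [hXdef]; simp only [Finset.coe_filter, Set.mem_setOf_eq, Finset.mem_univ,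
            true_and]; exact hca)
        (by
          rw [hXdef]; simp only [Finset.coe_filter, Set.mem_setOf_eq, Finset.mem_univ,
            true_and]; exact hcb) hab
      exact this
    · exfalso
      rw [hfx a hca, hfy b hcb] at hab
      exact hgnotX b hcb (hab ▸ hfXin a hca)
    · exfalso
      rw [hfy a hca, hfx b hcb] at hab
      exact hgnotX a hca (hab.symm ▸ hfXin b hcb)
    · rw [hfy a hca, hfy b hcb] at hab
      exact hg2 (by simp only [Set.mem_setOf_eq]; exact hmemY a hca)
        (by simp only [Set.mem_setOf_eq]; exact hmemY b hcb) hab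
  · intro u v hadj
    have hne := col.valid hadj
    rcases hcol01 u with hcu | hcu <;> rcases hcol01 v with hcv | hcv
    · exfalso; rw [hcu, hcv] at hne; exact hne rfl
    · rw [hfx u hcu, hfy v hcv]
      exact hadjmain u v hcu hcv hadj
    · rw [hfy u hcu, hfx v hcv]
      exact (hadjmain v u hcv hcu hadj.symm).symm
    · exfalso; rw [hcu, hcv] at hne; exact hne rfl

end RBDB2



/-- Ramsey numbers of bounded degree bipartite graphs (Conlon, Fox–Sudakov):
there is an absolute constant `C` such that every bipartite graph `G` on `n`
vertices with maximum degree at most `Δ` satisfies `R(G) ≤ 2^(C Δ) n`. -/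
theorem ramsey_bounded_degree_bipartite :
    ∃ C : ℝ, ∀ Δ : ℕ, 0 < Δ → ∀ (n : ℕ) (G : SimpleGraph (Fin n)),
      G.Colorable 2 →
      (∀ v : Fin n, (G.neighborSet v).ncard ≤ Δ) →
      ∀ (W : Type) [Fintype W],
        (2 : ℝ) ^ (C * Δ) * n ≤ (Fintype.card W : ℝ) →
        ∀ R : SimpleGraph W,
          (∃ f : Fin n → W, Function.Injective f ∧
            ∀ u v, G.Adj u v → R.Adj (f u) (f v)) ∨
          (∃ f : Fin n → W, Function.Injective f ∧
            ∀ u v, G.Adj u v → Rᶜ.Adj (f u) (f v)) := by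

  refine ⟨10, ?_⟩
  intro Δ hΔ n G hcol hdeg W _Wf hW R
  classical
  by_cases hn : n = 0
  · subst hn
    exact Or.inl ⟨fun v => v.elim0, fun a => a.elim0, fun u => u.elim0⟩
  have hn1 : 1 ≤ n := by omega
  have hΔ1 : 1 ≤ Δ := hΔ
  have hN : 2 ^ (10 * Δ) * n ≤ Fintype.card W := by
    have hr : ((10:ℝ) * (Δ:ℕ)) = (((10 * Δ : ℕ) : ℕ) : ℝ) := by push_cast; ring
    rw [hr, Real.rpow_natCast] at hW
    have h' : ((2 ^ (10*Δ) * n : ℕ) : ℝ) ≤ (Fintype.card W : ℝ) := by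
      push_cast
      exact hW
    exact_mod_cast h'
  have hdeg' : ∀ v, G.degree v ≤ Δ := by
    intro v
    have h := hdeg v
    have heq : (G.neighborSet v).ncard = G.degree v := by
      rw [Set.ncard_eq_toFinset_card', Set.toFinset_card,
        SimpleGraph.card_neighborSet_eq_degree]
    omega
  obtain ⟨col⟩ := hcol
  have hsum : ∑ v : W, R.degree v + ∑ v : W, Rᶜ.degree v
      = Fintype.card W * (Fintype.card W - 1) := by
    rw [← Finset.sum_add_distrib]
    have hv : ∀ v : W, R.degree v + Rᶜ.degree v = Fintype.card W - 1 := by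
      intro v
      have h1 := SimpleGraph.degree_compl (G := R) (v := v)
      have h2 := R.degree_lt_card_verts v
      omega
    rw [Finset.sum_congr rfl (fun v _ => hv v), Finset.sum_const, Finset.card_univ,
      smul_eq_mul]
  rcases le_total (∑ v : W, Rᶜ.degree v) (∑ v : W, R.degree v) with hc | hc
  · obtain ⟨f, hinj, hadj⟩ := RBDB2.embed_main R hΔ1 hn1 G col hdeg' hN (by omega)
    exact Or.inl ⟨f, hinj, hadj⟩
  · obtain ⟨f, hinj, hadj⟩ := RBDB2.embed_main Rᶜ hΔ1 hn1 G col hdeg' hN (by omega)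
    exact Or.inr ⟨f, hinj, hadj⟩
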